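/- If X and Y are hyper-sober T0 spaces, then the product space X × Y is hyper-sober. -/

import Mathlib

/-- A subset `A` of a topological space is irreducible: it is nonempty and whenever
it is contained in the union of two closed sets, it is contained in one of them. -/
def IsIrred {X : Type*} [TopologicalSpace X] (A : Set X) : Prop :=
  A.Nonempty ∧ ∀ B C : Set X, IsClosed B → IsClosed C → A ⊆ B ∪ C → A ⊆ B ∨ A ⊆ C

/-- A space is hyper-sober if every irreducible subset `F` contains a unique point `x`
with `F ⊆ cl {x}`. -/
def HyperSober (X : Type*) [TopologicalSpace X] : Prop :=
  ∀ F : Set X, IsIrred F → ∃! x, x ∈ F ∧ F ⊆ closure {x}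

lemma isIrred_iff_isIrreducible {X : Type*} [TopologicalSpace X] {A : Set X} :
    IsIrred A ↔ IsIrreducible A := by
  constructor
  · rintro ⟨hne, h⟩
    exact ⟨hne, isPreirreducible_iff_isClosed_union_isClosed.mpr h⟩
  · rintro ⟨hne, h⟩
    exact ⟨hne, isPreirreducible_iff_isClosed_union_isClosed.mp h⟩

theorem hyperSober_prod {X Y : Type*} [TopologicalSpace X] [TopologicalSpace Y]
    [T0Space X] [T0Space Y] (hX : HyperSober X) (hY : HyperSober Y) :
    HyperSober (X × Y) := by
  intro F hF
  have hFirr : IsIrreducible F := isIrred_iff_isIrreducible.mp hF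
  have hA : IsIrreducible (Prod.fst '' F) := hFirr.image _ continuous_fst.continuousOn
  obtain ⟨x, ⟨hxF, hxcl⟩, hxuniq⟩ := hX _ (isIrred_iff_isIrreducible.mpr hA)
  set S : Set (X × Y) := F \ (Prod.fst ⁻¹' {x}) with hSdef
  -- Key fact: F is not contained in the closure of S
  have key : ¬ F ⊆ closure S := by
    intro hsub
    rcases S.eq_empty_or_nonempty with hSe | hSne
    · rw [hSe, closure_empty, Set.subset_empty_iff] at hsub
      exact hF.1.ne_empty hsub
    · have hSirr : IsIrreducible S := by
        refine ⟨hSne, isPreirreducible_iff_isClosed_union_isClosed.mpr ?_⟩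
        intro B C hB hC hBC
        have hFBC : F ⊆ B ∪ C := hsub.trans (closure_minimal hBC (hB.union hC))
        rcases hF.2 B C hB hC hFBC with h | h
        · exact Or.inl (Set.diff_subset.trans h)
        · exact Or.inr (Set.diff_subset.trans h)
      have hA' : IsIrreducible (Prod.fst '' S) := hSirr.image _ continuous_fst.continuousOn
      obtain ⟨x', ⟨hx'S, hx'cl⟩, _⟩ := hX _ (isIrred_iff_isIrreducible.mpr hA')
      have hsub2 : Prod.fst '' F ⊆ closure {x'} := by
        rintro a ⟨p, hpF, rfl⟩
        have h1 : p ∈ closure S := hsub hpF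
        have h2 : p.1 ∈ closure (Prod.fst '' S) :=
          image_closure_subset_closure_image continuous_fst ⟨p, h1, rfl⟩
        exact (closure_minimal hx'cl isClosed_closure) h2
      have hx'F : x' ∈ Prod.fst '' F := (Set.image_mono Set.diff_subset) hx'S
      have hxx' : x' = x := hxuniq x' ⟨hx'F, hsub2⟩
      obtain ⟨p, hpS, hp1⟩ := hx'S
      exact hpS.2 (by rw [Set.mem_preimage, hp1, hxx']; rfl)
  -- The fiber over x
  set T : Set Y := {b | (x, b) ∈ F} with hTdef
  have hTne : T.Nonempty := by
    obtain ⟨p, hpF, hp1⟩ := hxF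
    exact ⟨p.2, by simpa [hTdef, ← hp1] using hpF⟩
  have hTirr : IsIrred T := by
    refine ⟨hTne, fun B C hB hC hBC => ?_⟩
    have hcover : F ⊆ (Set.univ ×ˢ B) ∪ ((Set.univ ×ˢ C) ∪ closure S) := by
      intro p hpF
      by_cases hp1 : p.1 = x
      · have hpT : p.2 ∈ T := by simp [hTdef, ← hp1, hpF]
        rcases hBC hpT with h | h
        · exact Or.inl ⟨trivial, h⟩
        · exact Or.inr (Or.inl ⟨trivial, h⟩)
      · exact Or.inr (Or.inr (subset_closure ⟨hpF, hp1⟩))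
    rcases hF.2 _ _ (isClosed_univ.prod hB)
        ((isClosed_univ.prod hC).union isClosed_closure) hcover with h | h
    · exact Or.inl fun b hb => ((h hb : ((x, b) : X × Y) ∈ _)).2
    · rcases hF.2 _ _ (isClosed_univ.prod hC) isClosed_closure h with h' | h'
      · exact Or.inr fun b hb => ((h' hb : ((x, b) : X × Y) ∈ _)).2
      · exact absurd h' key
  obtain ⟨y₀, ⟨hy₀T, hy₀cl⟩, _⟩ := hY T hTirr
  have hsnd : F ⊆ Set.univ ×ˢ closure {y₀} := by
    have hcover : F ⊆ (Set.univ ×ˢ closure {y₀}) ∪ closure S := by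
      intro p hpF
      by_cases hp1 : p.1 = x
      · exact Or.inl ⟨trivial, hy₀cl (by simp [hTdef, ← hp1, hpF])⟩
      · exact Or.inr (subset_closure ⟨hpF, hp1⟩)
    rcases hF.2 _ _ (isClosed_univ.prod isClosed_closure) isClosed_closure hcover with h | h
    · exact h
    · exact absurd h key
  have hgen : F ⊆ closure {((x, y₀) : X × Y)} := by
    intro p hpF
    have h1 : p.1 ∈ closure {x} := hxcl ⟨p, hpF, rfl⟩
    have h2 : p.2 ∈ closure {y₀} := (hsnd hpF).2
    have : ({((x, y₀) : X × Y)} : Set (X × Y)) = {x} ×ˢ {y₀} := by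
      ext q; simp [Prod.ext_iff]
    rw [this, closure_prod_eq]
    exact ⟨h1, h2⟩
  refine ⟨(x, y₀), ⟨hy₀T, hgen⟩, ?_⟩
  rintro ⟨p, q⟩ ⟨hpqF, hpqcl⟩
  have h1 : ((p, q) : X × Y) ⤳ (x, y₀) := specializes_iff_mem_closure.mpr (hpqcl hy₀T)
  have h2 : ((x, y₀) : X × Y) ⤳ (p, q) := specializes_iff_mem_closure.mpr (hgen hpqF)
  exact (h1.antisymm h2).eq
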